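/- For the weight function w(i,j) = (i+j)/i², the minimal cost b(n) of jumping from n down to 1 satisfies b(n) < W for all n ≥ 1, where W = Σ_{k=1}^∞ (p_k + p_{k+1})/p_k². -/

import Mathlib

/-- Minimal cost `b(n)` of a jumping pattern from `n` down to `1`:
`b(1)=0` and `b(n) = min_{1 <= k < n} (w(k,n) + b(k))`. -/
noncomputable def minCost (w : ℕ → ℕ → ℝ) : ℕ → ℝ
  | 0 => 0
  | 1 => 0
  | (n+2) =>
    ((Finset.Icc 1 (n+1)).attach).inf'
      ⟨⟨1, by simp⟩, Finset.mem_attach _ _⟩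
      (fun k => w k.1 (n+2) + minCost w k.1)
decreasing_by
  have := Finset.mem_Icc.mp k.2; omega

/-- The lexicographically-first cost-minimizing jump sequence. -/
noncomputable def jumpSeq (w : ℕ → ℕ → ℝ) : ℕ → ℕ := fun n =>
  if n ≤ 1 then 1
  else sInf {k | 1 ≤ k ∧ k < n ∧ w k n + minCost w k = minCost w n}

/-- The Pell numbers. -/
def pell : ℕ → ℤ
  | 0 => 0
  | 1 => 1
  | (n+2) => 2 * pell (n+1) + pell n

def P : ℕ → ℕ
  | 0 => 0
  | 1 => 1
  | (n+2) => 2 * P (n+1) + P n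

lemma P_cast : ∀ k, (P k : ℤ) = pell k
  | 0 => rfl
  | 1 => rfl
  | (k+2) => by
    have h1 := P_cast (k+1); have h2 := P_cast k
    simp [P, pell]; omega

lemma P_ge : ∀ k, 2 ^ k ≤ P (k+1)
  | 0 => by simp [P]
  | 1 => by simp [P]
  | (k+2) => by
    have h1 : 2 ^ (k+1) ≤ P (k+2) := P_ge (k+1)
    have h2 := P_ge k
    show 2 ^ (k+2) ≤ 2 * P (k+2) + P (k+1)
    have : 2 ^ (k+2) = 2 * 2 ^ (k+1) := by ring
    omega

lemma P_pos (k : ℕ) : 1 ≤ P (k+1) := le_trans (Nat.one_le_two_pow) (P_ge k)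

lemma P_double (k : ℕ) : 2 * P (k+1) ≤ P (k+2) := by
  cases k with
  | zero => simp [P]
  | succ k => show 2 * P (k+2) ≤ 2 * P (k+2) + P (k+1); omega

lemma minCost_le (w : ℕ → ℕ → ℝ) (n k : ℕ) (h1 : 1 ≤ k) (h2 : k ≤ n+1) :
    minCost w (n+2) ≤ w k (n+2) + minCost w k := by
  rw [minCost]
  exact Finset.inf'_le _ (Finset.mem_attach _ ⟨k, Finset.mem_Icc.mpr ⟨h1, h2⟩⟩)

lemma minCost_nonneg (w : ℕ → ℕ → ℝ)
    (hw : ∀ i j : ℕ, w i j = ((i : ℝ) + j) / (i : ℝ) ^ 2) : ∀ n, 0 ≤ minCost w n := by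
  intro n
  induction n using Nat.strong_induction_on with
  | _ n ih =>
    match n with
    | 0 => rw [minCost]
    | 1 => rw [minCost]
    | (m+2) =>
      rw [minCost]
      apply Finset.le_inf'
      rintro ⟨k, hk⟩ -
      have hk' := Finset.mem_Icc.mp hk
      have h0 : 0 ≤ w k (m+2) := by
        rw [hw]; positivity
      have := ih k (by omega)
      linarith

noncomputable def F : ℕ → ℝ := fun k => ((pell (k+1) : ℝ) + (pell (k+2) : ℝ)) / (pell (k+1) : ℝ) ^ 2

lemma F_eq (k : ℕ) : F k = ((P (k+1) : ℝ) + (P (k+2) : ℝ)) / (P (k+1) : ℝ) ^ 2 := by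
  have h1 := P_cast (k+1); have h2 := P_cast (k+2)
  simp only [F, ← h1, ← h2]; push_cast; ring_nf

lemma F_pos (k : ℕ) : 0 < F k := by
  rw [F_eq]
  have h1 : (0:ℝ) < P (k+1) := by exact_mod_cast P_pos k
  have h2 : (0:ℝ) < P (k+2) := by exact_mod_cast P_pos (k+1)
  positivity

lemma F_summable : Summable F := by
  have hg : Summable (fun k : ℕ => 4 * (1/2 : ℝ) ^ k) := (summable_geometric_two).mul_left 4
  have hle : ∀ k : ℕ, F k ≤ 4 * (1/2 : ℝ) ^ k := by
    intro k
    rw [F_eq]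
    have hp : (2:ℝ)^k ≤ P (k+1) := by exact_mod_cast P_ge k
    have h1 : (0:ℝ) < P (k+1) := lt_of_lt_of_le (by positivity) hp
    have hd : (P (k+2) : ℝ) ≤ 3 * P (k+1) := by
      have := P_double k
      have hkk : P (k+2) ≤ 3 * P (k+1) := by
        cases k with
        | zero => simp [P]
        | succ k =>
          have := P_double k
          show 2 * P (k+2) + P (k+1) ≤ 3 * P (k+2)
          omega
      exact_mod_cast hkk
    have : ((P (k+1) : ℝ) + (P (k+2) : ℝ)) / (P (k+1) : ℝ) ^ 2
        ≤ 4 * (P (k+1) : ℝ) / (P (k+1) : ℝ) ^ 2 := by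
      apply div_le_div_of_nonneg_right ?_ (by positivity) |>.trans_eq rfl
      linarith
    refine this.trans ?_
    rw [pow_two]
    rw [mul_div_assoc]
    have : (P (k+1) : ℝ) / ((P (k+1):ℝ) * (P (k+1):ℝ)) = 1 / (P (k+1):ℝ) := by
      field_simp
    rw [this]
    have h2 : (1:ℝ) / (P (k+1):ℝ) ≤ (1/2)^k := by
      have he : ((1:ℝ)/2)^k = 1/2^k := by rw [div_pow]; simp
      rw [he]
      exact one_div_le_one_div_of_le (by positivity) hp
    linarith
  exact Summable.of_nonneg_of_le (fun k => (F_pos k).le) hle hg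

lemma main_bound (w : ℕ → ℕ → ℝ)
    (hw : ∀ i j : ℕ, w i j = ((i : ℝ) + j) / (i : ℝ) ^ 2) :
    ∀ m n : ℕ, 1 ≤ n → n ≤ P (m+1) →
      minCost w n ≤ ∑ k ∈ Finset.range m, F k := by
  intro m
  induction m with
  | zero =>
    intro n h1 h2
    simp [P] at h2
    have : n = 1 := le_antisymm h2 h1
    subst this
    rw [minCost]; simp
  | succ m ih =>
    intro n h1 h2
    by_cases hc : n ≤ P (m+1)
    · calc minCost w n ≤ ∑ k ∈ Finset.range m, F k := ih n h1 hc
        _ ≤ ∑ k ∈ Finset.range (m+1), F k := by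
          rw [Finset.sum_range_succ]; have := F_pos m; linarith
    · push_neg at hc
      have hp := P_pos m
      have hn2 : 2 ≤ n := by omega
      obtain ⟨n', rfl⟩ : ∃ n', n = n' + 2 := ⟨n - 2, by omega⟩
      have hstep := minCost_le w n' (P (m+1)) hp (by omega)
      have hw1 : w (P (m+1)) (n'+2) ≤ F m := by
        rw [F_eq, hw]
        have h1' : (0:ℝ) < P (m+1) := by exact_mod_cast hp
        apply div_le_div_of_nonneg_right ?_ (by positivity) |>.trans_eq rfl
        have : ((n':ℝ)+2) ≤ (P (m+2) : ℝ) := by exact_mod_cast h2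
        push_cast
        linarith
      have hrec := ih (P (m+1)) hp le_rfl
      rw [Finset.sum_range_succ]
      linarith

theorem stmt_8 (w : ℕ → ℕ → ℝ)
    (hw : ∀ i j : ℕ, w i j = ((i : ℝ) + j) / (i : ℝ) ^ 2) :
    ∀ n : ℕ, 1 ≤ n →
      minCost w n < ∑' k : ℕ, ((pell (k+1) : ℝ) + (pell (k+2) : ℝ)) / (pell (k+1) : ℝ) ^ 2 := by
  intro n hn
  have hnm : n ≤ P (n+1) := by
    have h1 := P_ge n
    have h2 := Nat.lt_two_pow_self (n := n)
    omega
  have h1 := main_bound w hw n n hn hnm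
  have h2 : ∑ k ∈ Finset.range n, F k < ∑' k, F k := by
    calc ∑ k ∈ Finset.range n, F k < ∑ k ∈ Finset.range (n+1), F k := by
          rw [Finset.sum_range_succ]; have := F_pos n; linarith
      _ ≤ ∑' k, F k := Summable.sum_le_tsum _ (fun i _ => (F_pos i).le) F_summable
  exact lt_of_le_of_lt h1 h2
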